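/- For the polynomial map F : ℂ³ → ℂ³ defined by F(x₁,x₂,x₃) = ((x₁x₂)², (x₂x₃)², x₁x₂²x₃ + x₂), the asymptotic set S_F is the quadratic cone { (α₁, α₂, α₃) ∈ ℂ³ : α₃² = α₁α₂ }. -/
import Mathlib


open Filter Topology

/-- The asymptotic set of a map `F : ℂ³ → ℂ³`. -/
def asymptoticSet (F : ℂ × ℂ × ℂ → ℂ × ℂ × ℂ) : Set (ℂ × ℂ × ℂ) :=
  {a | ∃ ξ : ℕ → ℂ × ℂ × ℂ,
    Tendsto (fun k => ‖ξ k‖) atTop atTop ∧ Tendsto (fun k => F (ξ k)) atTop (𝓝 a)}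

lemma aux_nat_norm (k : ℕ) : ‖((k : ℂ) + 1)‖ = (k : ℝ) + 1 := by
  rw [show ((k : ℂ) + 1) = (((k + 1 : ℕ)) : ℂ) by push_cast; ring, RCLike.norm_natCast]
  push_cast; ring

lemma aux_inv_sq_tendsto : Tendsto (fun k : ℕ => (((k : ℂ) + 1) ^ 2)⁻¹) atTop (𝓝 0) := by
  rw [tendsto_zero_iff_norm_tendsto_zero]
  have h : Tendsto (fun k : ℕ => (((k : ℝ) + 1) ^ 2)⁻¹) atTop (𝓝 0) :=
    tendsto_inv_atTop_zero.comp
      ((tendsto_pow_atTop (two_ne_zero)).comp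
        (tendsto_atTop_add_const_right _ 1 tendsto_natCast_atTop_atTop))
  refine h.congr fun k => ?_
  rw [norm_inv, norm_pow, aux_nat_norm]

lemma aux_inv_tendsto : Tendsto (fun k : ℕ => ((k : ℂ) + 1)⁻¹) atTop (𝓝 0) := by
  rw [tendsto_zero_iff_norm_tendsto_zero]
  have h : Tendsto (fun k : ℕ => (((k : ℝ) + 1))⁻¹) atTop (𝓝 0) :=
    tendsto_inv_atTop_zero.comp (tendsto_atTop_add_const_right _ 1 tendsto_natCast_atTop_atTop)
  refine h.congr fun k => ?_
  rw [norm_inv, aux_nat_norm]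

lemma aux_nat_ne (k : ℕ) : ((k : ℂ) + 1) ≠ 0 := Nat.cast_add_one_ne_zero k

theorem stmt_8 :
    asymptoticSet (fun x : ℂ × ℂ × ℂ =>
        ((x.1 * x.2.1) ^ 2, (x.2.1 * x.2.2) ^ 2, x.1 * x.2.1 ^ 2 * x.2.2 + x.2.1)) =
      {a : ℂ × ℂ × ℂ | a.2.2 ^ 2 = a.1 * a.2.1} := by
  ext a
  constructor
  · rintro ⟨ξ, hnorm, hF⟩
    have h1 : Tendsto (fun k => ((ξ k).1 * (ξ k).2.1) ^ 2) atTop (𝓝 a.1) := (continuous_fst.tendsto a).comp hF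
    have h2 : Tendsto (fun k => ((ξ k).2.1 * (ξ k).2.2) ^ 2) atTop (𝓝 a.2.1) :=
      (continuous_fst.tendsto a.2).comp ((continuous_snd.tendsto a).comp hF)
    have h3 : Tendsto (fun k => (ξ k).1 * (ξ k).2.1 ^ 2 * (ξ k).2.2 + (ξ k).2.1)
        atTop (𝓝 a.2.2) :=
      (continuous_snd.tendsto a.2).comp ((continuous_snd.tendsto a).comp hF)
    set C : ℝ := ‖a.1‖ + ‖a.2.1‖ + ‖a.2.2‖ + 2 with hC
    have hCpos : (0:ℝ) < C := by positivity
    have sq_bound : ∀ z : ℂ, ∀ c : ℝ, ‖z ^ 2‖ ≤ c → ‖z‖ ≤ 1 + c := by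
      intro z c hzc
      rw [norm_pow] at hzc
      nlinarith [norm_nonneg z]
    have hu : ∀ᶠ k in atTop, ‖(ξ k).1 * (ξ k).2.1‖ ≤ C := by
      filter_upwards [h1.norm.eventually_le_const
        (show ‖a.1‖ < ‖a.1‖ + 1 by linarith)] with k hk
      have := sq_bound _ _ hk
      have h2' : (0:ℝ) ≤ ‖a.2.1‖ := norm_nonneg _
      have h3' : (0:ℝ) ≤ ‖a.2.2‖ := norm_nonneg _
      simp only [hC]; linarith
    have hv : ∀ᶠ k in atTop, ‖(ξ k).2.1 * (ξ k).2.2‖ ≤ C := by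
      filter_upwards [h2.norm.eventually_le_const
        (show ‖a.2.1‖ < ‖a.2.1‖ + 1 by linarith)] with k hk
      have := sq_bound _ _ hk
      have h1' : (0:ℝ) ≤ ‖a.1‖ := norm_nonneg _
      have h3' : (0:ℝ) ≤ ‖a.2.2‖ := norm_nonneg _
      simp only [hC]; linarith
    have hw : ∀ᶠ k in atTop, ‖(ξ k).1 * (ξ k).2.1 ^ 2 * (ξ k).2.2 + (ξ k).2.1‖ ≤ C := by
      filter_upwards [h3.norm.eventually_le_const
        (show ‖a.2.2‖ < ‖a.2.2‖ + 1 by linarith)] with k hk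
      have h1' : (0:ℝ) ≤ ‖a.1‖ := norm_nonneg _
      have h2' : (0:ℝ) ≤ ‖a.2.1‖ := norm_nonneg _
      simp only [hC]; linarith
    -- bound on x₂
    have hx2bd : ∀ᶠ k in atTop, ‖(ξ k).2.1‖ ≤ C + C ^ 2 := by
      filter_upwards [hu, hv, hw] with k hku hkv hkw
      have key : (ξ k).2.1 =
          ((ξ k).1 * (ξ k).2.1 ^ 2 * (ξ k).2.2 + (ξ k).2.1) -
            ((ξ k).1 * (ξ k).2.1) * ((ξ k).2.1 * (ξ k).2.2) := by ring
      calc ‖(ξ k).2.1‖ = ‖((ξ k).1 * (ξ k).2.1 ^ 2 * (ξ k).2.2 + (ξ k).2.1) -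
            ((ξ k).1 * (ξ k).2.1) * ((ξ k).2.1 * (ξ k).2.2)‖ := by rw [← key]
        _ ≤ ‖(ξ k).1 * (ξ k).2.1 ^ 2 * (ξ k).2.2 + (ξ k).2.1‖ +
            ‖((ξ k).1 * (ξ k).2.1) * ((ξ k).2.1 * (ξ k).2.2)‖ := norm_sub_le _ _
        _ ≤ C + C ^ 2 := by
            rw [norm_mul]
            have : ‖(ξ k).1 * (ξ k).2.1‖ * ‖(ξ k).2.1 * (ξ k).2.2‖ ≤ C * C :=
              mul_le_mul hku hkv (norm_nonneg _) hCpos.le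
            nlinarith
    set D : ℝ := C + C ^ 2 + (C + C ^ 2) ^ 2 with hD
    -- ‖x₂ k‖ * ‖ξ k‖ ≤ D eventually
    have hkey : ∀ᶠ k in atTop, ‖(ξ k).2.1‖ ≤ D / ‖ξ k‖ := by
      filter_upwards [hu, hv, hx2bd, hnorm.eventually_ge_atTop 1] with k hku hkv hkb hk1
      have hξpos : (0:ℝ) < ‖ξ k‖ := lt_of_lt_of_le one_pos hk1
      rw [le_div_iff₀ hξpos]
      have hnormle : ‖ξ k‖ = max ‖(ξ k).1‖ (max ‖(ξ k).2.1‖ ‖(ξ k).2.2‖) := by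
        rw [Prod.norm_def, Prod.norm_def]
      have hb1 : ‖(ξ k).2.1‖ * ‖(ξ k).1‖ ≤ D := by
        rw [← norm_mul, mul_comm]
        calc ‖(ξ k).1 * (ξ k).2.1‖ ≤ C := hku
          _ ≤ D := by simp only [hD]; nlinarith
      have hb2 : ‖(ξ k).2.1‖ * ‖(ξ k).2.1‖ ≤ D := by
        calc ‖(ξ k).2.1‖ * ‖(ξ k).2.1‖ ≤ (C + C ^ 2) * (C + C ^ 2) :=
              mul_le_mul hkb hkb (norm_nonneg _) (by nlinarith)
          _ ≤ D := by simp only [hD]; nlinarith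
      have hb3 : ‖(ξ k).2.1‖ * ‖(ξ k).2.2‖ ≤ D := by
        rw [← norm_mul]
        calc ‖(ξ k).2.1 * (ξ k).2.2‖ ≤ C := hkv
          _ ≤ D := by simp only [hD]; nlinarith
      rw [hnormle]
      rcases le_total ‖(ξ k).1‖ (max ‖(ξ k).2.1‖ ‖(ξ k).2.2‖) with h | h
      · rw [max_eq_right h]
        rcases le_total ‖(ξ k).2.1‖ ‖(ξ k).2.2‖ with h' | h'
        · rw [max_eq_right h']; exact hb3
        · rw [max_eq_left h']; exact hb2
      · rw [max_eq_left h]; exact hb1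
    have hx2 : Tendsto (fun k => (ξ k).2.1) atTop (𝓝 0) := by
      rw [tendsto_zero_iff_norm_tendsto_zero]
      refine squeeze_zero' (Eventually.of_forall fun k => norm_nonneg _) hkey ?_
      exact Tendsto.div_atTop tendsto_const_nhds hnorm
    -- uv → a₃
    have huv : Tendsto (fun k => (ξ k).1 * (ξ k).2.1 ^ 2 * (ξ k).2.2) atTop (𝓝 a.2.2) := by
      have := h3.sub hx2
      simp only [add_sub_cancel_right, sub_zero] at this
      exact this
    have hA : Tendsto (fun k => ((ξ k).1 * (ξ k).2.1 ^ 2 * (ξ k).2.2) ^ 2) atTop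
        (𝓝 (a.2.2 ^ 2)) := huv.pow 2
    have hB : Tendsto (fun k => ((ξ k).1 * (ξ k).2.1 ^ 2 * (ξ k).2.2) ^ 2) atTop
        (𝓝 (a.1 * a.2.1)) := by
      have := h1.mul h2
      refine this.congr fun k => ?_
      ring
    exact tendsto_nhds_unique hA hB
  · intro ha
    simp only [Set.mem_setOf_eq] at ha
    -- choose square roots α β with α² = a₁, β² = a₂, αβ = a₃
    obtain ⟨α, β, hα, hβ, hαβ⟩ : ∃ α β : ℂ, α ^ 2 = a.1 ∧ β ^ 2 = a.2.1 ∧ α * β = a.2.2 := by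
      by_cases h0 : a.1 = 0
      · obtain ⟨β, hβ⟩ := IsAlgClosed.exists_pow_nat_eq a.2.1 two_pos
        have : a.2.2 = 0 := by
          have : a.2.2 ^ 2 = 0 := by rw [ha, h0, zero_mul]
          exact pow_eq_zero_iff two_ne_zero |>.mp this
        exact ⟨0, β, by simp [h0], hβ, by simp [this]⟩
      · obtain ⟨α, hα⟩ := IsAlgClosed.exists_pow_nat_eq a.1 two_pos
        have hα0 : α ≠ 0 := by rintro rfl; simp at hα; exact h0 hα.symm
        refine ⟨α, a.2.2 / α, hα, ?_, by field_simp⟩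
        rw [div_pow, hα, ha]
        field_simp
    by_cases hα0 : α = 0
    · -- a.1 = 0, a.2.2 = 0
      have ha1 : a.1 = 0 := by rw [← hα, hα0]; ring
      have ha3 : a.2.2 = 0 := by rw [← hαβ, hα0, zero_mul]
      refine ⟨fun k => ((k : ℂ) + 1, (((k : ℂ) + 1) ^ 2)⁻¹, β * ((k : ℂ) + 1) ^ 2), ?_, ?_⟩
      · refine tendsto_atTop_mono (fun k => norm_fst_le _) ?_
        refine Tendsto.congr (fun k => (aux_nat_norm k).symm) ?_
        exact tendsto_atTop_add_const_right _ 1 tendsto_natCast_atTop_atTop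
      · have hcomp : ∀ k : ℕ,
            ((((k : ℂ) + 1) * (((k : ℂ) + 1) ^ 2)⁻¹) ^ 2,
              ((((k : ℂ) + 1) ^ 2)⁻¹ * (β * ((k : ℂ) + 1) ^ 2)) ^ 2,
              ((k : ℂ) + 1) * ((((k : ℂ) + 1) ^ 2)⁻¹) ^ 2 * (β * ((k : ℂ) + 1) ^ 2)
                + (((k : ℂ) + 1) ^ 2)⁻¹)
            = ((((k : ℂ) + 1) ^ 2)⁻¹, β ^ 2, β * ((k : ℂ) + 1)⁻¹ + (((k : ℂ) + 1) ^ 2)⁻¹) := by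
          intro k
          have hk := aux_nat_ne k
          refine Prod.ext ?_ (Prod.ext ?_ ?_) <;> field_simp <;> ring
        simp only [hcomp]
        rw [show a = (a.1, a.2.1, a.2.2) from rfl, ha1, ha3, ← hβ]
        refine Tendsto.prodMk_nhds aux_inv_sq_tendsto (Tendsto.prodMk_nhds tendsto_const_nhds ?_)
        have := (tendsto_const_nhds (x := β)).mul aux_inv_tendsto |>.add aux_inv_sq_tendsto
        simpa using this
    · refine ⟨fun k => (α * ((k : ℂ) + 1) ^ 2, (((k : ℂ) + 1) ^ 2)⁻¹,
        β * ((k : ℂ) + 1) ^ 2), ?_, ?_⟩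
      · refine tendsto_atTop_mono (fun k => norm_fst_le _) ?_
        have heq : ∀ k : ℕ, ‖α * ((k : ℂ) + 1) ^ 2‖ = ‖α‖ * ((k : ℝ) + 1) ^ 2 := by
          intro k
          rw [norm_mul, norm_pow, aux_nat_norm]
        refine Tendsto.congr (fun k => (heq k).symm) ?_
        refine Tendsto.const_mul_atTop (norm_pos_iff.mpr hα0) ?_
        exact (tendsto_pow_atTop two_ne_zero).comp
          (tendsto_atTop_add_const_right _ 1 tendsto_natCast_atTop_atTop)
      · have hcomp : ∀ k : ℕ,
            ((α * ((k : ℂ) + 1) ^ 2 * (((k : ℂ) + 1) ^ 2)⁻¹) ^ 2,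
              ((((k : ℂ) + 1) ^ 2)⁻¹ * (β * ((k : ℂ) + 1) ^ 2)) ^ 2,
              α * ((k : ℂ) + 1) ^ 2 * ((((k : ℂ) + 1) ^ 2)⁻¹) ^ 2 * (β * ((k : ℂ) + 1) ^ 2)
                + (((k : ℂ) + 1) ^ 2)⁻¹)
            = (α ^ 2, β ^ 2, α * β + (((k : ℂ) + 1) ^ 2)⁻¹) := by
          intro k
          have hk := aux_nat_ne k
          refine Prod.ext ?_ (Prod.ext ?_ ?_) <;> field_simp <;> ring
        simp only [hcomp]
        rw [show a = (a.1, a.2.1, a.2.2) from rfl, ← hα, ← hβ, ← hαβ]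
        refine Tendsto.prodMk_nhds tendsto_const_nhds (Tendsto.prodMk_nhds tendsto_const_nhds ?_)
        have := (tendsto_const_nhds (x := α * β)).add aux_inv_sq_tendsto
        simpa using this
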